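/- Let G be a finite group, P a Sylow p-subgroup of G, and x, y elements of the center of P. If x and y are conjugate in G, then they are conjugate in the normalizer N_G(P). (Burnside's fusion theorem.) -/

import Mathlib

/-- **Burnside's fusion theorem.** If `P` is a Sylow `p`-subgroup of a finite group `G`
and `x, y ∈ Z(P)` are conjugate in `G`, then they are conjugate in `N_G(P)`. -/
theorem burnside_fusion {G : Type*} [Group G] [Fintype G] {p : ℕ} [Fact p.Prime]
    (P : Sylow p G) (x y : G)
    (hx : x ∈ (P : Subgroup G) ⊓ Subgroup.centralizer ((P : Subgroup G) : Set G))
    (hy : y ∈ (P : Subgroup G) ⊓ Subgroup.centralizer ((P : Subgroup G) : Set G))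
    (hconj : ∃ g : G, g * x * g⁻¹ = y) :
    ∃ n ∈ Subgroup.normalizer ((P : Subgroup G) : Set G), n * x * n⁻¹ = y := by
  obtain ⟨g, rfl⟩ := hconj
  have h := P.conj_eq_normalizer_conj_of_mem_centralizer x g⁻¹ hx.2 (by
    simpa using hy.2)
  obtain ⟨n, hn, hn2⟩ := h
  refine ⟨n⁻¹, inv_mem hn, ?_⟩
  simp only [inv_inv] at hn2
  rw [hn2]
  group
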